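/- There exists an IFS consisting of two bi-Lipschitz contractions on ℝ whose attractor has positive Lebesgue measure but empty interior. -/

import Mathlib

open Filter Set Metric MeasureTheory Topology
open scoped ENNReal

/-- Minimal number of closed intervals of diameter at most `δ` (i.e. closed balls of
radius `δ/2`) needed to cover `E`. -/
noncomputable def coverNum (E : Set ℝ) (δ : ℝ) : ℕ :=
  sInf {n : ℕ | ∃ c : Fin n → ℝ, E ⊆ ⋃ i, Metric.closedBall (c i) (δ / 2)}

/-- Lower box dimension of a set `E ⊆ ℝ`. -/
noncomputable def lowerBoxDim (E : Set ℝ) : ℝ :=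
  Filter.liminf (fun δ : ℝ => Real.log (coverNum E δ) / (-Real.log δ)) (𝓝[>] 0)

/-- Upper box dimension of a set `E ⊆ ℝ`. -/
noncomputable def upperBoxDim (E : Set ℝ) : ℝ :=
  Filter.limsup (fun δ : ℝ => Real.log (coverNum E δ) / (-Real.log δ)) (𝓝[>] 0)

/-- Assouad dimension of a set `E ⊆ ℝ`. -/
noncomputable def assouadDim (E : Set ℝ) : ℝ :=
  Filter.limsup (fun r : ℝ =>
      ⨆ R : Set.Ioi (0:ℝ), ⨆ x : E,
        Real.log (coverNum (E ∩ Set.Icc ((x:ℝ) - (R:ℝ)) ((x:ℝ) + (R:ℝ))) ((R:ℝ) * r)) /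
          Real.log (1 / r))
    (𝓝[>] 0)

/-- Lower dimension of a set `E ⊆ ℝ`. -/
noncomputable def lowerDim (E : Set ℝ) : ℝ :=
  Filter.liminf (fun r : ℝ =>
      ⨅ R : Set.Ioo (0:ℝ) 1, ⨅ x : E,
        Real.log (coverNum (E ∩ Set.Icc ((x:ℝ) - (R:ℝ)) ((x:ℝ) + (R:ℝ))) ((R:ℝ) * r)) /
          Real.log (1 / r))
    (𝓝[>] 0)

/-- Lower local dimension of a measure `μ` at `x`. -/
noncomputable def lowerLocalDim (μ : Measure ℝ) (x : ℝ) : ℝ :=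
  Filter.liminf (fun δ : ℝ => Real.log ((μ (Metric.closedBall x δ)).toReal) / Real.log δ) (𝓝[>] 0)

/-- Upper local dimension of a measure `μ` at `x`. -/
noncomputable def upperLocalDim (μ : Measure ℝ) (x : ℝ) : ℝ :=
  Filter.limsup (fun δ : ℝ => Real.log ((μ (Metric.closedBall x δ)).toReal) / Real.log δ) (𝓝[>] 0)

/-- Binary entropy function (note that `Real.log 0 = 0` in Mathlib, which implements the
convention `0 log 0 = 0`). -/
noncomputable def Hent (p : ℝ) : ℝ := -(p * Real.log p) - (1 - p) * Real.log (1 - p)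

/-- `D(λ) = max_{(p,q) ∈ [0,1]²} (βH(p) + (1-β)H(q)) / (λ + β(1-β)(q-p) log 2)`. -/
noncomputable def Dfun (β lam : ℝ) : ℝ :=
  sSup ((fun pq : ℝ × ℝ =>
    (β * Hent pq.1 + (1 - β) * Hent pq.2) /
      (lam + β * (1 - β) * (pq.2 - pq.1) * Real.log 2)) '' (Set.Icc 0 1 ×ˢ Set.Icc 0 1))

/-- `a_0 = 1`, `a_1 = 2`. -/
noncomputable def aBit (b : Bool) : ℝ := if b then 2 else 1

/-- The length function `ℓ(ω₁…ωₙ) = (a_{ω₁}⋯a_{ω_{⌊βn⌋}}) / (a_{ω₁}⋯a_{ω_n})^β · M^{-n}`.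
A finite word `ω₁…ωₙ` is encoded as the list `[ω₁, …, ωₙ]`. -/
noncomputable def ellBM (β M : ℝ) (w : List Bool) : ℝ :=
  ((w.take ⌊β * (w.length : ℝ)⌋₊).map aBit).prod / ((w.map aBit).prod) ^ β *
    M ^ (-(w.length : ℝ))

/-- The length function `ℓ*(ω₁…ωₙ) = (a_{ω₁}⋯a_{ω_{⌊βn⌋}}) / (a_{ω₁}⋯a_{ω_n})^β ·
(∏_{i=1}^n M_i)⁻¹`. -/
noncomputable def ellStar (β : ℝ) (Mseq : ℕ → ℝ) (w : List Bool) : ℝ :=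
  ((w.take ⌊β * (w.length : ℝ)⌋₊).map aBit).prod / ((w.map aBit).prod) ^ β *
    (∏ i ∈ Finset.range w.length, Mseq (i + 1))⁻¹

/-- The left endpoint of the generating interval `I_w` of the Cantor set determined by the
length function `ℓ` (in the standard construction, the left child shares the left endpoint of
its parent and the right child shares the right endpoint, so the endpoints are determined by
`ℓ`): passing from a prefix `p` to `p·1` moves the left endpoint by `ℓ(p) - ℓ(p·1)`. -/
noncomputable def leftEnd (ℓ : List Bool → ℝ) (w : List Bool) : ℝ :=
  ∑ k ∈ Finset.range w.length,
    if w.getD k false = true then ℓ (w.take k) - ℓ (w.take (k + 1)) else 0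

/-- Right endpoint of the generating interval `I_w`. -/
noncomputable def rightEnd (ℓ : List Bool → ℝ) (w : List Bool) : ℝ := leftEnd ℓ w + ℓ w

/-- The Cantor set determined by the length function `ℓ`:
`E = ⋂_n ⋃_{|w| = n} I_w` with `I_w = [leftEnd ℓ w, rightEnd ℓ w]`. -/
noncomputable def cantorOf (ℓ : List Bool → ℝ) : Set ℝ :=
  ⋂ n : ℕ, ⋃ (w : List Bool) (_ : w.length = n), Set.Icc (leftEnd ℓ w) (rightEnd ℓ w)

/-- The coding map `π : Ω^ℕ → E` associated with left-endpoint function `l`: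
`π(ω) = sup_n l(ω₁…ωₙ)` (the prefixes' left endpoints increase to `π(ω)`). -/
noncomputable def codeMapL (l : List Bool → ℝ) (ω : ℕ → Bool) : ℝ :=
  ⨆ n : ℕ, l (List.ofFn fun k : Fin n => ω k)

/-- Prepend the symbol `i` to an infinite word: `iω`. -/
def consSeq (i : Bool) (ω : ℕ → Bool) : ℕ → Bool := fun n => if n = 0 then i else ω (n - 1)

/-- The set of ratios `{ |I_{iω}|/|I_ω| : ω ∈ Ω* } ∪ { |G_{iω}|/|G_ω| : ω ∈ Ω* }` for a Cantor
construction with generating intervals `I_w = [l w, r w]` and gaps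
`G_w = (r (w0), l (w1))`. -/
def ratioSet (l r : List Bool → ℝ) (i : Bool) : Set ℝ :=
  (Set.range fun w : List Bool => (r (i :: w) - l (i :: w)) / (r w - l w)) ∪
  (Set.range fun w : List Bool =>
    (l ((i :: w) ++ [true]) - r ((i :: w) ++ [false])) /
      (l (w ++ [true]) - r (w ++ [false])))

/-- `u_n` in the additive representation of the symmetric Cantor set (`0`-indexed, so `c 0`
is the first ratio `c₁`). -/
noncomputable def uSym (c : ℕ → ℝ) (n : ℕ) : ℝ := (∏ j ∈ Finset.range n, c j) * (1 - c n)

/-- The coding map of the symmetric Cantor set: `π(ω) = Σ_n ω_n u_n`. -/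
noncomputable def piSym (c : ℕ → ℝ) (ω : ℕ → Bool) : ℝ := ∑' n, if ω n then uSym c n else 0

/-- The symmetric Cantor set `E_c = { Σ_n ω_n u_n : ω ∈ {0,1}^ℕ }`. -/
noncomputable def symCantor (c : ℕ → ℝ) : Set ℝ := Set.range (piSym c)

/-- Left endpoint of the generating interval `I_w` of the symmetric Cantor set. -/
noncomputable def lSym (c : ℕ → ℝ) (w : List Bool) : ℝ :=
  ∑ k ∈ Finset.range w.length, if w.getD k false = true then uSym c k else 0

/-- Right endpoint of the generating interval `I_w` of the symmetric Cantor set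
(`|I_w| = c₁⋯c_n` for `|w| = n`). -/
noncomputable def rSym (c : ℕ → ℝ) (w : List Bool) : ℝ :=
  lSym c w + ∏ j ∈ Finset.range w.length, c j

/-- Support of a Borel measure on `ℝ`: points all of whose neighbourhoods have positive
measure. -/
def measSupport (μ : Measure ℝ) : Set ℝ := {x | ∀ U ∈ 𝓝 x, 0 < μ U}

/-- `ν`-measure of the cylinder set `[b₁…bₙ]`, as a real number. -/
noncomputable def cylP (ν : Measure (ℕ → Bool)) {n : ℕ} (b : Fin n → Bool) : ℝ :=
  (ν {ω | ∀ i : Fin n, ω i = b i}).toReal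

namespace Stmt2

noncomputable def TT : ℕ → ℝ := fun n => (2:ℝ)⁻¹ ^ n * ∏ j ∈ Finset.range n, (1 - (2:ℝ)⁻¹ ^ (j+1))
noncomputable def uu : ℕ → ℝ := fun n => TT n - TT (n+1)
noncomputable def GG : ℕ → ℝ := fun n => TT n - 2 * TT (n+1)

lemma eps_pos (n : ℕ) : 0 < (2:ℝ)⁻¹ ^ (n+1) := by positivity
lemma eps_le (n : ℕ) : (2:ℝ)⁻¹ ^ (n+1) ≤ 1/2 := by
  calc (2:ℝ)⁻¹ ^ (n+1) ≤ (2:ℝ)⁻¹ ^ 1 := by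
        apply pow_le_pow_of_le_one (by norm_num) (by norm_num) (by omega)
    _ = 1/2 := by norm_num

lemma TT_pos (n : ℕ) : 0 < TT n := by
  apply mul_pos (by positivity)
  apply Finset.prod_pos
  intro j _
  have := eps_le j; linarith

lemma TT_succ (n : ℕ) : TT (n+1) = TT n * ((1 - (2:ℝ)⁻¹ ^ (n+1)) / 2) := by
  simp only [TT, Finset.prod_range_succ, pow_succ]
  ring

lemma uu_eq (n : ℕ) : uu n = TT n * ((1 + (2:ℝ)⁻¹ ^ (n+1)) / 2) := by
  simp only [uu, TT_succ]; ring

lemma GG_eq (n : ℕ) : GG n = TT n * (2:ℝ)⁻¹ ^ (n+1) := by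
  simp only [GG, TT_succ]; ring

lemma uu_pos (n : ℕ) : 0 < uu n := by
  rw [uu_eq]; have := eps_pos n; have := TT_pos n; nlinarith

lemma GG_pos (n : ℕ) : 0 < GG n := by
  rw [GG_eq]; exact mul_pos (TT_pos n) (eps_pos n)

lemma uu_le_TT (n : ℕ) : uu n ≤ TT n := by
  have := TT_pos (n+1); simp only [uu]; linarith

lemma TT_le (n : ℕ) : TT n ≤ (2:ℝ)⁻¹ ^ n := by
  have h : ∏ j ∈ Finset.range n, (1 - (2:ℝ)⁻¹ ^ (j+1)) ≤ 1 := by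
    apply Finset.prod_le_one
    · intro j _; have := eps_le j; linarith
    · intro j _; have := eps_pos j; linarith
  have h2 : (0:ℝ) ≤ (2:ℝ)⁻¹ ^ n := by positivity
  calc TT n ≤ (2:ℝ)⁻¹ ^ n * 1 := mul_le_mul_of_nonneg_left h h2
    _ = _ := mul_one _

lemma TT_tendsto : Tendsto TT atTop (nhds 0) := by
  have h := tendsto_pow_atTop_nhds_zero_of_lt_one (by norm_num : (0:ℝ) ≤ 2⁻¹) (by norm_num : (2:ℝ)⁻¹ < 1)
  apply squeeze_zero (fun n => (TT_pos n).le) TT_le h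


lemma scalar_aux1 (x : ℝ) (hx : 0 < x) (hx2 : x ≤ 1/2) :
    (1/8) * ((1 + x) / 2) ≤ ((1 - x) / 2) * ((1 + x * 2⁻¹) / 2) := by nlinarith [sq_nonneg x]
lemma scalar_aux2 (x : ℝ) (hx : 0 < x) (hx2 : x ≤ 1/2) :
    ((1 - x) / 2) * ((1 + x * 2⁻¹) / 2) ≤ (1/2) * ((1 + x) / 2) := by nlinarith [sq_nonneg x]
lemma scalar_aux3 (x : ℝ) (hx : 0 < x) (hx2 : x ≤ 1/2) :
    (1/8) * x ≤ ((1 - x) / 2) * (x * 2⁻¹) := by nlinarith [sq_nonneg x]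
lemma scalar_aux4 (x : ℝ) (hx : 0 < x) (hx2 : x ≤ 1/2) :
    ((1 - x) / 2) * (x * 2⁻¹) ≤ (1/2) * x := by nlinarith [sq_nonneg x]

lemma ratio_aux1 (t x : ℝ) (ht : 0 < t) (hx : 0 < x) (hx2 : x ≤ 1/2) :
    (1/8) * (t * ((1 + x) / 2)) ≤ t * ((1 - x) / 2) * ((1 + x * 2⁻¹) / 2) := by
  have h := mul_le_mul_of_nonneg_left (scalar_aux1 x hx hx2) ht.le
  calc (1/8) * (t * ((1 + x) / 2)) = t * ((1/8) * ((1 + x) / 2)) := by ring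
    _ ≤ t * (((1 - x) / 2) * ((1 + x * 2⁻¹) / 2)) := h
    _ = t * ((1 - x) / 2) * ((1 + x * 2⁻¹) / 2) := by ring
lemma ratio_aux2 (t x : ℝ) (ht : 0 < t) (hx : 0 < x) (hx2 : x ≤ 1/2) :
    t * ((1 - x) / 2) * ((1 + x * 2⁻¹) / 2) ≤ (1/2) * (t * ((1 + x) / 2)) := by
  have h := mul_le_mul_of_nonneg_left (scalar_aux2 x hx hx2) ht.le
  calc t * ((1 - x) / 2) * ((1 + x * 2⁻¹) / 2) = t * (((1 - x) / 2) * ((1 + x * 2⁻¹) / 2)) := by ring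
    _ ≤ t * ((1/2) * ((1 + x) / 2)) := h
    _ = (1/2) * (t * ((1 + x) / 2)) := by ring
lemma ratio_aux3 (t x : ℝ) (ht : 0 < t) (hx : 0 < x) (hx2 : x ≤ 1/2) :
    (1/8) * (t * x) ≤ t * ((1 - x) / 2) * (x * 2⁻¹) := by
  have h := mul_le_mul_of_nonneg_left (scalar_aux3 x hx hx2) ht.le
  calc (1/8) * (t * x) = t * ((1/8) * x) := by ring
    _ ≤ t * (((1 - x) / 2) * (x * 2⁻¹)) := h
    _ = t * ((1 - x) / 2) * (x * 2⁻¹) := by ring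
lemma ratio_aux4 (t x : ℝ) (ht : 0 < t) (hx : 0 < x) (hx2 : x ≤ 1/2) :
    t * ((1 - x) / 2) * (x * 2⁻¹) ≤ (1/2) * (t * x) := by
  have h := mul_le_mul_of_nonneg_left (scalar_aux4 x hx hx2) ht.le
  calc t * ((1 - x) / 2) * (x * 2⁻¹) = t * (((1 - x) / 2) * (x * 2⁻¹)) := by ring
    _ ≤ t * ((1/2) * x) := h
    _ = (1/2) * (t * x) := by ring

lemma uu_ratio_low (n : ℕ) : (1/8 : ℝ) * uu n ≤ uu (n+1) := by
  rw [uu_eq n, uu_eq (n+1), TT_succ n, pow_succ]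
  exact ratio_aux1 _ _ (TT_pos n) (eps_pos n) (eps_le n)

lemma uu_ratio_high (n : ℕ) : uu (n+1) ≤ (1/2 : ℝ) * uu n := by
  rw [uu_eq n, uu_eq (n+1), TT_succ n, pow_succ]
  exact ratio_aux2 _ _ (TT_pos n) (eps_pos n) (eps_le n)

lemma GG_ratio_low (n : ℕ) : (1/8 : ℝ) * GG n ≤ GG (n+1) := by
  rw [GG_eq n, GG_eq (n+1), TT_succ n, pow_succ]
  exact ratio_aux3 _ _ (TT_pos n) (eps_pos n) (eps_le n)

lemma GG_ratio_high (n : ℕ) : GG (n+1) ≤ (1/2 : ℝ) * GG n := by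
  rw [GG_eq n, GG_eq (n+1), TT_succ n, pow_succ]
  exact ratio_aux4 _ _ (TT_pos n) (eps_pos n) (eps_le n)

lemma GG_antitone {k n : ℕ} (h : k ≤ n) : GG n ≤ GG k := by
  induction n with
  | zero => simp_all
  | succ m ih =>
    rcases Nat.lt_or_ge k (m+1) with hlt | hge
    · have := ih (by omega)
      have := GG_ratio_high m
      have := GG_pos m
      linarith
    · have hk : k = m + 1 := by omega
      rw [hk]

lemma sum_range_uu (m : ℕ) : ∑ j ∈ Finset.range m, uu j = TT 0 - TT m := by
  induction m with
  | zero => simp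
  | succ k ih => rw [Finset.sum_range_succ, ih]; simp [uu]

lemma summable_uu : Summable uu := by
  apply Summable.of_nonneg_of_le (fun n => (uu_pos n).le) (fun n => le_trans (uu_le_TT n) (TT_le n))
  exact summable_geometric_of_lt_one (by norm_num) (by norm_num)

noncomputable def pii (v : ℕ → ℝ) (ω : ℕ → Bool) : ℝ := ∑' n, if ω n then v n else 0
noncomputable def uhat : ℕ → ℝ := fun n => uu (n+1)

lemma uhat_pos (n : ℕ) : 0 < uhat n := uu_pos _
lemma uhat_le (n : ℕ) : uhat n ≤ uu n := le_trans (uu_ratio_high n) (by have := uu_pos n; linarith)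

lemma summable_uhat : Summable uhat := (summable_nat_add_iff 1).mpr summable_uu

lemma tail_uu (n : ℕ) : ∑' k, uu (k + n) = TT n := by
  have hs : Summable (fun k => uu (k + n)) := (summable_nat_add_iff n).mpr summable_uu
  refine (hs.hasSum_iff_tendsto_nat.mpr ?_).tsum_eq
  have heq : ∀ m, ∑ i ∈ Finset.range m, uu (i + n) = TT n - TT (n + m) := by
    intro m
    induction m with
    | zero => simp
    | succ k ih =>
      rw [Finset.sum_range_succ, ih, show n + (k+1) = (k+n)+1 by omega,
        show n + k = k + n by omega]
      simp only [uu]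
      ring
  simp only [heq]
  have h2 : Tendsto (fun m => TT (n + m)) atTop (nhds 0) := by
    have := TT_tendsto.comp (tendsto_add_atTop_nat n)
    simpa only [Function.comp_def, add_comm] using this
  have := (tendsto_const_nhds (x := TT n) (f := atTop (α := ℕ))).sub h2
  simpa using this

lemma tail_uhat (n : ℕ) : ∑' k, uhat (k + n) = TT (n+1) := by
  have : ∀ k, uhat (k + n) = uu (k + (n+1)) := fun k => rfl
  rw [tsum_congr this, tail_uu]

lemma chi_nonneg (v : ℕ → ℝ) (hv : ∀ n, 0 ≤ v n) (ω : ℕ → Bool) (n : ℕ) :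
    0 ≤ (if ω n then v n else 0) := by by_cases h : ω n <;> simp [h, hv n]

lemma chi_le (v : ℕ → ℝ) (hv : ∀ n, 0 ≤ v n) (ω : ℕ → Bool) (n : ℕ) :
    (if ω n then v n else 0) ≤ v n := by by_cases h : ω n <;> simp [h, hv n]

lemma summable_chi (v : ℕ → ℝ) (hv : ∀ n, 0 ≤ v n) (hS : Summable v) (ω : ℕ → Bool) :
    Summable (fun n => if ω n then v n else 0) :=
  Summable.of_nonneg_of_le (chi_nonneg v hv ω) (chi_le v hv ω) hS

lemma summable_chi_shift (v : ℕ → ℝ) (hv : ∀ n, 0 ≤ v n) (hS : Summable v) (ω : ℕ → Bool) (m : ℕ) :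
    Summable (fun k => if ω (k + m) then v (k + m) else 0) :=
  Summable.of_nonneg_of_le (fun k => chi_nonneg v hv ω (k+m)) (fun k => chi_le v hv ω (k+m))
    ((summable_nat_add_iff m).mpr hS)

lemma summable_shift (v : ℕ → ℝ) (hS : Summable v) (m : ℕ) :
    Summable (fun k => v (k + m)) :=
  (summable_nat_add_iff m).mpr hS

lemma pii_sub (v : ℕ → ℝ) (hv : ∀ n, 0 ≤ v n) (hS : Summable v) (ω τ : ℕ → Bool) (n : ℕ)
    (hpre : ∀ k < n, ω k = τ k) (hω : ω n = false) (hτ : τ n = true) :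
    pii v τ - pii v ω = (2 * v n - ∑' k, v (k + n)) +
      ∑' k, ((if ω (k + (n+1)) then 0 else v (k + (n+1))) + (if τ (k + (n+1)) then v (k + (n+1)) else 0)) := by
  have sτ := summable_chi v hv hS τ
  have sω := summable_chi v hv hS ω
  have sτ' := summable_chi_shift v hv hS τ (n+1)
  have sω' := summable_chi_shift v hv hS ω (n+1)
  have sv' := summable_shift v hS (n+1)
  have sτn := summable_chi_shift v hv hS τ n
  have sωn := summable_chi_shift v hv hS ω n
  have hτ1 : pii v τ = (∑ i ∈ Finset.range n, if τ i then v i else 0) + ∑' k, (if τ (k + n) then v (k + n) else 0) :=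
    (Summable.sum_add_tsum_nat_add n sτ).symm
  have hω1 : pii v ω = (∑ i ∈ Finset.range n, if ω i then v i else 0) + ∑' k, (if ω (k + n) then v (k + n) else 0) :=
    (Summable.sum_add_tsum_nat_add n sω).symm
  have hhead : (∑ i ∈ Finset.range n, if τ i then v i else 0) = ∑ i ∈ Finset.range n, if ω i then v i else 0 := by
    apply Finset.sum_congr rfl
    intro i hi
    rw [hpre i (Finset.mem_range.mp hi)]
  have idx : ∀ k : ℕ, k + 1 + n = k + (n + 1) := fun k => by omega
  have hτ2 : ∑' k, (if τ (k + n) then v (k + n) else 0)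
      = v n + ∑' k, (if τ (k + (n+1)) then v (k + (n+1)) else 0) := by
    rw [Summable.tsum_eq_zero_add sτn]
    congr 1
    · simp [hτ]
    · apply tsum_congr; intro k; rw [idx k]
  have hω2 : ∑' k, (if ω (k + n) then v (k + n) else 0)
      = ∑' k, (if ω (k + (n+1)) then v (k + (n+1)) else 0) := by
    rw [Summable.tsum_eq_zero_add sωn]
    have h0 : (if ω (0 + n) then v (0 + n) else 0) = 0 := by simp [hω]
    rw [h0, zero_add]
    apply tsum_congr; intro k; rw [idx k]
  have hv2 : ∑' k, v (k + n) = v n + ∑' k, v (k + (n+1)) := by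
    rw [Summable.tsum_eq_zero_add (summable_shift v hS n)]
    congr 1
    · simp
    · apply tsum_congr; intro k; rw [idx k]
  have hsplit : ∑' k, ((if ω (k + (n+1)) then 0 else v (k + (n+1))) + (if τ (k + (n+1)) then v (k + (n+1)) else 0))
      = (∑' k, (v (k + (n+1)) - (if ω (k + (n+1)) then v (k + (n+1)) else 0)))
        + ∑' k, (if τ (k + (n+1)) then v (k + (n+1)) else 0) := by
    rw [← Summable.tsum_add (sv'.sub sω') sτ']
    apply tsum_congr; intro k
    rcases hb : ω (k + (n+1)) <;> simp [hb]
  rw [hτ1, hω1, hhead, hτ2, hω2, hv2, hsplit, Summable.tsum_sub sv' sω']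
  ring

lemma pii_comp (ω τ : ℕ → Bool) (n : ℕ)
    (hpre : ∀ k < n, ω k = τ k) (hω : ω n = false) (hτ : τ n = true) :
    GG n ≤ pii uu τ - pii uu ω
    ∧ (1/8) * (pii uu τ - pii uu ω) ≤ pii uhat τ - pii uhat ω
    ∧ pii uhat τ - pii uhat ω ≤ (1/2) * (pii uu τ - pii uu ω) := by
  have huv : ∀ n, 0 ≤ uu n := fun n => (uu_pos n).le
  have hhv : ∀ n, 0 ≤ uhat n := fun n => (uhat_pos n).le
  have hid1 := pii_sub uu huv summable_uu ω τ n hpre hω hτ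
  have hid2 := pii_sub uhat hhv summable_uhat ω τ n hpre hω hτ
  rw [tail_uu] at hid1
  rw [tail_uhat] at hid2
  have hGG1 : 2 * uu n - TT n = GG n := by simp only [uu, GG]; ring
  have hGG2 : 2 * uhat n - TT (n+1) = GG (n+1) := by simp only [uhat, uu, GG]; ring
  rw [hGG1] at hid1
  rw [hGG2] at hid2
  set e1 : ℕ → ℝ := fun k => (if ω (k + (n+1)) then 0 else uu (k + (n+1))) + (if τ (k + (n+1)) then uu (k + (n+1)) else 0) with he1
  set e2 : ℕ → ℝ := fun k => (if ω (k + (n+1)) then 0 else uhat (k + (n+1))) + (if τ (k + (n+1)) then uhat (k + (n+1)) else 0) with he2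
  have hs1 : Summable e1 := by
    apply Summable.add
    · apply Summable.of_nonneg_of_le (fun k => ?_) (fun k => ?_) (summable_shift uu summable_uu (n+1))
      · by_cases h : ω (k + (n+1)) <;> simp [h, huv]
      · by_cases h : ω (k + (n+1)) <;> simp [h, huv]
    · exact summable_chi_shift uu huv summable_uu τ (n+1)
  have hs2 : Summable e2 := by
    apply Summable.add
    · apply Summable.of_nonneg_of_le (fun k => ?_) (fun k => ?_) (summable_shift uhat summable_uhat (n+1))
      · by_cases h : ω (k + (n+1)) <;> simp [h, hhv]
      · by_cases h : ω (k + (n+1)) <;> simp [h, hhv]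
    · exact summable_chi_shift uhat hhv summable_uhat τ (n+1)
  have he1nn : ∀ k, 0 ≤ e1 k := by
    intro k
    simp only [he1]
    apply add_nonneg
    · by_cases h : ω (k + (n+1)) <;> simp [h, huv]
    · by_cases h : τ (k + (n+1)) <;> simp [h, huv]
  have hlow : ∀ k, (1/8) * e1 k ≤ e2 k := by
    intro k
    simp only [he1, he2]
    have h8 : (1/8 : ℝ) * uu (k + (n+1)) ≤ uhat (k + (n+1)) := uu_ratio_low (k + (n+1))
    rcases hb : ω (k + (n+1)) <;> rcases hc : τ (k + (n+1)) <;>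
      (try norm_num) <;> nlinarith [uu_pos (k + (n+1)), uhat_pos (k + (n+1))]
  have hhigh : ∀ k, e2 k ≤ (1/2) * e1 k := by
    intro k
    simp only [he1, he2]
    have h2 : uhat (k + (n+1)) ≤ (1/2 : ℝ) * uu (k + (n+1)) := uu_ratio_high (k + (n+1))
    rcases hb : ω (k + (n+1)) <;> rcases hc : τ (k + (n+1)) <;>
      (try norm_num) <;> nlinarith [uu_pos (k + (n+1)), uhat_pos (k + (n+1))]
  refine ⟨?_, ?_, ?_⟩
  · rw [hid1]
    have : 0 ≤ ∑' k, e1 k := tsum_nonneg he1nn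
    linarith
  · rw [hid1, hid2, mul_add, ← tsum_mul_left]
    have h1 := GG_ratio_low n
    have h2 := Summable.tsum_le_tsum hlow (hs1.mul_left _) hs2
    linarith
  · rw [hid1, hid2, mul_add, ← tsum_mul_left]
    have h1 := GG_ratio_high n
    have h2 := Summable.tsum_le_tsum hhigh hs2 (hs1.mul_left _)
    linarith

lemma first_diff (ω τ : ℕ → Bool) (h : ω ≠ τ) :
    ∃ n, ω n ≠ τ n ∧ ∀ k < n, ω k = τ k := by
  have hne : ∃ n, ω n ≠ τ n := by
    by_contra hc
    push_neg at hc
    exact h (funext hc)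
  refine ⟨Nat.find hne, Nat.find_spec hne, fun k hk => ?_⟩
  by_contra hc
  exact Nat.find_min hne hk hc

lemma pii_strict_mono (ω τ : ℕ → Bool) (n : ℕ)
    (hpre : ∀ k < n, ω k = τ k) (hω : ω n = false) (hτ : τ n = true) :
    pii uu ω < pii uu τ := by
  have h := (pii_comp ω τ n hpre hω hτ).1
  have := GG_pos n
  linarith

lemma pii_bilip (ω τ : ℕ → Bool) (hlt : pii uu ω < pii uu τ) :
    (1/8) * (pii uu τ - pii uu ω) ≤ pii uhat τ - pii uhat ω
    ∧ pii uhat τ - pii uhat ω ≤ (1/2) * (pii uu τ - pii uu ω) := by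
  have hne : ω ≠ τ := by rintro rfl; exact lt_irrefl _ hlt
  obtain ⟨n, hn, hpre⟩ := first_diff ω τ hne
  rcases hb : ω n with _ | _
  · have hc : τ n = true := by
      rcases hc : τ n
      · rw [hb, hc] at hn; simp at hn
      · rfl
    obtain ⟨_, h1, h2⟩ := pii_comp ω τ n hpre hb hc
    exact ⟨h1, h2⟩
  · have hc : τ n = false := by
      rcases hc : τ n
      · rfl
      · rw [hb, hc] at hn; simp at hn
    have := pii_strict_mono τ ω n (fun k hk => (hpre k hk).symm) hc hb
    linarith

lemma pii_injective : Function.Injective (pii uu) := by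
  intro ω τ h
  by_contra hne
  obtain ⟨n, hn, hpre⟩ := first_diff ω τ hne
  rcases hb : ω n with _ | _
  · have hc : τ n = true := by
      rcases hc : τ n
      · rw [hb, hc] at hn; simp at hn
      · rfl
    have := pii_strict_mono ω τ n hpre hb hc
    linarith [le_of_eq h]
  · have hc : τ n = false := by
      rcases hc : τ n
      · rfl
      · rw [hb, hc] at hn; simp at hn
    have := pii_strict_mono τ ω n (fun k hk => (hpre k hk).symm) hc hb
    linarith [le_of_eq h]

noncomputable def Ecan : Set ℝ := Set.range (pii uu)
noncomputable def hmap : ℝ → ℝ := Function.extend (pii uu) (pii uhat) (fun _ => 0)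

lemma hmap_pi (ω : ℕ → Bool) : hmap (pii uu ω) = pii uhat ω :=
  pii_injective.extend_apply _ _ _

lemma pii_zero (v : ℕ → ℝ) : pii v (fun _ => false) = 0 := by simp [pii]

lemma TT_zero : TT 0 = 1 := by simp [TT]

lemma pii_one (v : ℕ → ℝ) : pii v (fun _ => true) = ∑' n, v n := by simp [pii]

lemma pii_uu_one : pii uu (fun _ => true) = 1 := by
  rw [pii_one]
  have := tail_uu 0
  simpa [TT_zero] using this

lemma pii_uhat_one : pii uhat (fun _ => true) = TT 1 := by
  rw [pii_one]
  have := tail_uhat 0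
  simpa using this

lemma pii_nonneg (v : ℕ → ℝ) (hv : ∀ n, 0 ≤ v n) (ω : ℕ → Bool) : 0 ≤ pii v ω :=
  tsum_nonneg (chi_nonneg v hv ω)

lemma pii_le (v : ℕ → ℝ) (hv : ∀ n, 0 ≤ v n) (hS : Summable v) (ω : ℕ → Bool) :
    pii v ω ≤ ∑' n, v n :=
  Summable.tsum_le_tsum (chi_le v hv ω) (summable_chi v hv hS ω) hS

lemma Ecan_subset : Ecan ⊆ Icc 0 1 := by
  rintro x ⟨ω, rfl⟩
  constructor
  · exact pii_nonneg uu (fun n => (uu_pos n).le) ω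
  · have h := pii_le uu (fun n => (uu_pos n).le) summable_uu ω
    have h2 : ∑' n, uu n = 1 := by
      have := tail_uu 0
      simpa [TT_zero] using this
    linarith

lemma pii_cont (v : ℕ → ℝ) (hv : ∀ n, 0 ≤ v n) (hS : Summable v) : Continuous (pii v) := by
  apply continuous_tsum (u := v) ?_ hS
  · intro n ω
    rw [Real.norm_eq_abs]
    rcases hb : ω n <;> simp [hb, hv n, abs_of_nonneg (hv n)]
  · intro n
    have hb : Continuous (fun b : Bool => if b then v n else 0) := continuous_of_discreteTopology
    exact hb.comp (continuous_apply n)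

lemma Ecan_compact : IsCompact Ecan := by
  rw [Ecan, ← Set.image_univ]
  exact isCompact_univ.image (pii_cont uu (fun n => (uu_pos n).le) summable_uu)

lemma Ecan_closed : IsClosed Ecan := Ecan_compact.isClosed

lemma zero_mem_Ecan : (0:ℝ) ∈ Ecan := ⟨fun _ => false, pii_zero uu⟩
lemma one_mem_Ecan : (1:ℝ) ∈ Ecan := ⟨fun _ => true, pii_uu_one⟩

lemma hmap_zero : hmap 0 = 0 := by
  have := hmap_pi (fun _ => false)
  rwa [pii_zero, pii_zero] at this

lemma hmap_bilip {x y : ℝ} (hx : x ∈ Ecan) (hy : y ∈ Ecan) (hxy : x < y) :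
    (1/8) * (y - x) ≤ hmap y - hmap x ∧ hmap y - hmap x ≤ (1/2) * (y - x) := by
  obtain ⟨ω, rfl⟩ := hx
  obtain ⟨τ, rfl⟩ := hy
  rw [hmap_pi, hmap_pi]
  exact pii_bilip ω τ hxy

lemma hmap_bilip_le {x y : ℝ} (hx : x ∈ Ecan) (hy : y ∈ Ecan) (hxy : x ≤ y) :
    (1/8) * (y - x) ≤ hmap y - hmap x ∧ hmap y - hmap x ≤ (1/2) * (y - x) := by
  rcases eq_or_lt_of_le hxy with rfl | hlt
  · simp
  · exact hmap_bilip hx hy hlt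

noncomputable def aa (x : ℝ) : ℝ := sSup (Ecan ∩ Iic x)
noncomputable def bb (x : ℝ) : ℝ := sInf (Ecan ∩ Ici x)
noncomputable def slopef (x : ℝ) : ℝ :=
  if bb x = aa x then (1/8) else (hmap (bb x) - hmap (aa x)) / (bb x - aa x)
noncomputable def Phi (x : ℝ) : ℝ :=
  if x < 0 then (1/8) * x
  else if 1 < x then hmap 1 + (1/8) * (x - 1)
  else hmap (aa x) + slopef x * (x - aa x)

lemma aa_spec {x : ℝ} (hx : x ∈ Icc 0 1) : aa x ∈ Ecan ∧ aa x ≤ x := by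
  have hne : (Ecan ∩ Iic x).Nonempty := ⟨0, zero_mem_Ecan, hx.1⟩
  have hcpt : IsCompact (Ecan ∩ Iic x) := Ecan_compact.inter_right isClosed_Iic
  have := hcpt.sSup_mem hne
  exact ⟨this.1, this.2⟩

lemma bb_spec {x : ℝ} (hx : x ∈ Icc 0 1) : bb x ∈ Ecan ∧ x ≤ bb x := by
  have hne : (Ecan ∩ Ici x).Nonempty := ⟨1, one_mem_Ecan, hx.2⟩
  have hcpt : IsCompact (Ecan ∩ Ici x) := Ecan_compact.inter_right isClosed_Ici
  have := hcpt.sInf_mem hne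
  exact ⟨this.1, this.2⟩

lemma le_aa {x e : ℝ} (hx : x ∈ Icc 0 1) (he : e ∈ Ecan) (hle : e ≤ x) : e ≤ aa x := by
  have hcpt : IsCompact (Ecan ∩ Iic x) := Ecan_compact.inter_right isClosed_Iic
  exact le_csSup hcpt.bddAbove ⟨he, hle⟩

lemma bb_le {x e : ℝ} (hx : x ∈ Icc 0 1) (he : e ∈ Ecan) (hle : x ≤ e) : bb x ≤ e := by
  have hcpt : IsCompact (Ecan ∩ Ici x) := Ecan_compact.inter_right isClosed_Ici
  exact csInf_le hcpt.bddBelow ⟨he, hle⟩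

lemma aa_of_mem {x : ℝ} (hx : x ∈ Ecan) : aa x = x :=
  le_antisymm (aa_spec (Ecan_subset hx)).2 (le_aa (Ecan_subset hx) hx le_rfl)

lemma bb_of_mem {x : ℝ} (hx : x ∈ Ecan) : bb x = x :=
  le_antisymm (bb_le (Ecan_subset hx) hx le_rfl) (bb_spec (Ecan_subset hx)).2

lemma slopef_mem {x : ℝ} (hx : x ∈ Icc 0 1) : (1/8) ≤ slopef x ∧ slopef x ≤ (1/2) := by
  rw [slopef]
  split
  · norm_num
  · rename_i hne
    have haa := aa_spec hx
    have hbb := bb_spec hx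
    have hlt : aa x < bb x := lt_of_le_of_ne (le_trans haa.2 hbb.2) (Ne.symm hne)
    have hpos : 0 < bb x - aa x := by linarith
    obtain ⟨h1, h2⟩ := hmap_bilip haa.1 hbb.1 hlt
    constructor
    · rw [le_div_iff₀ hpos]; linarith
    · rw [div_le_iff₀ hpos]; linarith

lemma Phi_eq {x : ℝ} (hx : x ∈ Icc 0 1) :
    Phi x = hmap (aa x) + slopef x * (x - aa x) := by
  rw [Phi, if_neg (by linarith [hx.1]), if_neg (by linarith [hx.2])]

lemma Phi_eq' {x : ℝ} (hx : x ∈ Icc 0 1) :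
    Phi x = hmap (bb x) - slopef x * (bb x - x) := by
  rw [Phi_eq hx]
  rcases eq_or_ne (bb x) (aa x) with heq | hne
  · have h1 : aa x ≤ x := (aa_spec hx).2
    have h2 : x ≤ bb x := (bb_spec hx).2
    have : aa x = x := by rw [heq] at h2; linarith
    rw [heq, this]
    ring
  · have hlt : aa x < bb x := lt_of_le_of_ne (le_trans (aa_spec hx).2 (bb_spec hx).2) (Ne.symm hne)
    rw [slopef, if_neg hne]
    have hs : (hmap (bb x) - hmap (aa x)) / (bb x - aa x) * (bb x - aa x)
        = hmap (bb x) - hmap (aa x) := div_mul_cancel₀ _ (sub_ne_zero.mpr (ne_of_gt hlt))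
    linear_combination hs

lemma Phi_on_E {x : ℝ} (hx : x ∈ Ecan) : Phi x = hmap x := by
  rw [Phi_eq (Ecan_subset hx), aa_of_mem hx]
  ring

lemma Phi_core {x y : ℝ} (hx : x ∈ Icc 0 1) (hy : y ∈ Icc 0 1) (hxy : x ≤ y) :
    (1/8) * (y - x) ≤ Phi y - Phi x ∧ Phi y - Phi x ≤ (1/2) * (y - x) := by
  rcases le_or_gt (bb x) y with hcase | hcase
  · -- far case
    have haax := aa_spec hx
    have hbbx := bb_spec hx
    have haay := aa_spec hy
    have hbby := bb_spec hy
    have hpq : bb x ≤ aa y := le_aa hy hbbx.1 hcase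
    obtain ⟨hm1, hm2⟩ := hmap_bilip_le hbbx.1 haay.1 hpq
    have hsx := slopef_mem hx
    have hsy := slopef_mem hy
    rw [Phi_eq hy, Phi_eq' hx]
    have e1 : 0 ≤ y - aa y := by linarith [haay.2]
    have e2 : 0 ≤ bb x - x := by linarith [hbbx.2]
    have b1 : (1/8) * (y - aa y) ≤ slopef y * (y - aa y) := mul_le_mul_of_nonneg_right hsy.1 e1
    have b2 : slopef y * (y - aa y) ≤ (1/2) * (y - aa y) := mul_le_mul_of_nonneg_right hsy.2 e1
    have b3 : (1/8) * (bb x - x) ≤ slopef x * (bb x - x) := mul_le_mul_of_nonneg_right hsx.1 e2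
    have b4 : slopef x * (bb x - x) ≤ (1/2) * (bb x - x) := mul_le_mul_of_nonneg_right hsx.2 e2
    constructor <;> linarith
  · -- same gap
    have haax := aa_spec hx
    have hbbx := bb_spec hx
    have haa_eq : aa y = aa x := by
      apply le_antisymm
      · have h1 := (aa_spec hy).1
        have h2 := (aa_spec hy).2
        rcases le_or_gt (aa y) (aa x) with h | h
        · exact h
        · -- aa y ∈ Ecan, aa y ≤ y < bb x, aa x < aa y: contradiction with bb_le
          exfalso
          have h3 : x < aa y := by
            by_contra hc
            push_neg at hc
            exact absurd (le_aa hx h1 hc) (not_le.mpr h)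
          have := bb_le hx h1 h3.le
          linarith
      · exact le_aa hy haax.1 (le_trans haax.2 hxy)
    have hbb_eq : bb y = bb x := by
      apply le_antisymm
      · exact bb_le hy hbbx.1 hcase.le
      · apply bb_le hx (bb_spec hy).1 (le_trans hxy (bb_spec hy).2)
    have hslope : slopef y = slopef x := by rw [slopef, slopef, haa_eq, hbb_eq]
    rw [Phi_eq hy, Phi_eq hx, haa_eq, hslope]
    have hsx := slopef_mem hx
    have hd : 0 ≤ y - x := by linarith
    constructor
    · have := mul_le_mul_of_nonneg_right hsx.1 hd
      nlinarith
    · have := mul_le_mul_of_nonneg_right hsx.2 hd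
      nlinarith

lemma Phi_nonpos {x : ℝ} (hx : x ≤ 0) : Phi x = (1/8) * x := by
  rcases lt_or_eq_of_le hx with h | h
  · rw [Phi, if_pos h]
  · subst h
    rw [Phi, if_neg (lt_irrefl _), if_neg (by norm_num)]
    rw [aa_of_mem zero_mem_Ecan, hmap_zero]
    ring

lemma Phi_ge_one {x : ℝ} (hx : 1 ≤ x) : Phi x = hmap 1 + (1/8) * (x - 1) := by
  rcases lt_or_eq_of_le hx with h | h
  · rw [Phi, if_neg (by linarith), if_pos h]
  · subst h
    rw [Phi, if_neg (by norm_num), if_neg (lt_irrefl _)]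
    rw [aa_of_mem one_mem_Ecan]
    ring

lemma Phi_main {x y : ℝ} (hxy : x ≤ y) :
    (1/8) * (y - x) ≤ Phi y - Phi x ∧ Phi y - Phi x ≤ (1/2) * (y - x) := by
  rcases le_or_gt y 0 with hy0 | hy0
  · rw [Phi_nonpos hy0, Phi_nonpos (le_trans hxy hy0)]
    constructor <;> linarith
  rcases le_or_gt 1 x with hx1 | hx1
  · rw [Phi_ge_one hx1, Phi_ge_one (le_trans hx1 hxy)]
    constructor <;> linarith
  · set x' := max x 0 with hx'
    set y' := min y 1 with hy'
    have hx'mem : x' ∈ Icc 0 1 := ⟨le_max_right _ _, max_le hx1.le zero_le_one⟩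
    have hy'mem : y' ∈ Icc 0 1 := ⟨le_min hy0.le zero_le_one, min_le_right _ _⟩
    have hx'y' : x' ≤ y' := max_le (le_min hxy hx1.le) (le_min hy0.le zero_le_one)
    have h1 : Phi x' - Phi x = (1/8) * (x' - x) := by
      rcases le_or_gt x 0 with h | h
      · have : x' = 0 := max_eq_right h
        rw [this, Phi_nonpos le_rfl, Phi_nonpos h]
        ring
      · have : x' = x := max_eq_left h.le
        rw [this]; ring
    have h2 : Phi y - Phi y' = (1/8) * (y - y') := by
      rcases le_or_gt 1 y with h | h
      · have : y' = 1 := min_eq_right h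
        rw [this, Phi_ge_one le_rfl, Phi_ge_one h]
        ring
      · have : y' = y := min_eq_left h.le
        rw [this]; ring
    have hxx' : x ≤ x' := le_max_left _ _
    have hyy' : y' ≤ y := min_le_left _ _
    obtain ⟨c1, c2⟩ := Phi_core hx'mem hy'mem hx'y'
    constructor <;> linarith

/-! Self-similarity -/

lemma pii_cons_false (τ : ℕ → Bool) : pii uu (consSeq false τ) = pii uhat τ := by
  rw [pii, Summable.tsum_eq_zero_add (summable_chi uu (fun n => (uu_pos n).le) summable_uu _)]
  have h0 : (if consSeq false τ 0 then uu 0 else 0) = 0 := by simp [consSeq]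
  rw [h0, zero_add]
  have hc : ∀ k : ℕ, (if consSeq false τ (k+1) then uu (k+1) else 0) = (if τ k then uhat k else 0) := by
    intro k; simp [consSeq, uhat]
  rw [tsum_congr hc]
  rfl

lemma pii_cons_true (τ : ℕ → Bool) : pii uu (consSeq true τ) = uu 0 + pii uhat τ := by
  rw [pii, Summable.tsum_eq_zero_add (summable_chi uu (fun n => (uu_pos n).le) summable_uu _)]
  have h0 : (if consSeq true τ 0 then uu 0 else 0) = uu 0 := by simp [consSeq]
  rw [h0]
  have hc : ∀ k : ℕ, (if consSeq true τ (k+1) then uu (k+1) else 0) = (if τ k then uhat k else 0) := by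
    intro k; simp [consSeq, uhat]
  rw [tsum_congr hc]
  rfl

lemma cons_decomp (ω : ℕ → Bool) : ω = consSeq (ω 0) (fun n => ω (n+1)) := by
  funext n
  cases n <;> simp [consSeq]

lemma Phi_image : Phi '' Ecan = Set.range (pii uhat) := by
  ext y
  constructor
  · rintro ⟨x, ⟨ω, rfl⟩, rfl⟩
    rw [Phi_on_E ⟨ω, rfl⟩, hmap_pi]
    exact ⟨ω, rfl⟩
  · rintro ⟨ω, rfl⟩
    exact ⟨pii uu ω, ⟨ω, rfl⟩, by rw [Phi_on_E ⟨ω, rfl⟩, hmap_pi]⟩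

lemma Ecan_eq : Ecan = Phi '' Ecan ∪ (fun z => uu 0 + z) '' (Phi '' Ecan) := by
  rw [Phi_image]
  ext x
  constructor
  · rintro ⟨ω, rfl⟩
    rcases h0 : ω 0 with _ | _
    · left
      refine ⟨fun n => ω (n+1), ?_⟩
      conv_rhs => rw [cons_decomp ω, h0]
      exact (pii_cons_false _).symm
    · right
      refine ⟨pii uhat (fun n => ω (n+1)), ⟨_, rfl⟩, ?_⟩
      conv_rhs => rw [cons_decomp ω, h0]
      exact (pii_cons_true _).symm
  · rintro (⟨τ, rfl⟩ | ⟨z, ⟨τ, rfl⟩, rfl⟩)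
    · exact ⟨consSeq false τ, pii_cons_false τ⟩
    · exact ⟨consSeq true τ, pii_cons_true τ⟩

/-! Covers -/

noncomputable def Lr (n : ℕ) (ω : ℕ → Bool) : ℝ := ∑ j ∈ Finset.range n, if ω j then uu j else 0

def ext (n : ℕ) (w : Fin n → Bool) : ℕ → Bool := fun k => if h : k < n then w ⟨k, h⟩ else false

noncomputable def KK (n : ℕ) : Set ℝ :=
  ⋃ w : Fin n → Bool, Icc (Lr n (ext n w)) (Lr n (ext n w) + TT n)

lemma Lr_ext (n : ℕ) (ω : ℕ → Bool) : Lr n (ext n (fun j : Fin n => ω j)) = Lr n ω := by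
  apply Finset.sum_congr rfl
  intro j hj
  have hj' := Finset.mem_range.mp hj
  simp [ext, hj']

lemma pii_ext (n : ℕ) (w : Fin n → Bool) : pii uu (ext n w) = Lr n (ext n w) := by
  rw [pii, ← Summable.sum_add_tsum_nat_add n (summable_chi uu (fun n => (uu_pos n).le) summable_uu _)]
  have : ∀ k : ℕ, (if ext n w (k + n) then uu (k + n) else 0) = 0 := by
    intro k
    have : ¬ (k + n < n) := by omega
    simp [ext, this]
  rw [tsum_congr this, tsum_zero, add_zero]
  rfl

lemma Lr_mem_Ecan (n : ℕ) (w : Fin n → Bool) : Lr n (ext n w) ∈ Ecan :=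
  ⟨ext n w, pii_ext n w⟩

lemma mem_KK (n : ℕ) (ω : ℕ → Bool) : pii uu ω ∈ KK n := by
  refine Set.mem_iUnion.mpr ⟨fun j : Fin n => ω j, ?_⟩
  rw [Lr_ext]
  have hsplit : pii uu ω = Lr n ω + ∑' k, (if ω (k + n) then uu (k + n) else 0) :=
    ((Summable.sum_add_tsum_nat_add n (summable_chi uu (fun n => (uu_pos n).le) summable_uu ω)).symm)
  have h1 : 0 ≤ ∑' k, (if ω (k + n) then uu (k + n) else 0) :=
    tsum_nonneg (fun k => chi_nonneg uu (fun m => (uu_pos m).le) ω (k + n))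
  have h2 : ∑' k, (if ω (k + n) then uu (k + n) else 0) ≤ TT n := by
    rw [← tail_uu n]
    exact Summable.tsum_le_tsum (fun k => chi_le uu (fun m => (uu_pos m).le) ω (k + n))
      (summable_chi_shift uu (fun m => (uu_pos m).le) summable_uu ω n)
      (summable_shift uu summable_uu n)
  constructor <;> linarith [hsplit]

lemma Ecan_subset_KK (n : ℕ) : Ecan ⊆ KK n := by
  rintro x ⟨ω, rfl⟩
  exact mem_KK n ω

lemma KK_antitone : Antitone KK := by
  apply antitone_nat_of_succ_le
  intro n x hx
  obtain ⟨w, hw⟩ := Set.mem_iUnion.mp hx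
  refine Set.mem_iUnion.mpr ⟨fun j : Fin n => w j.castSucc, ?_⟩
  have hL : Lr (n+1) (ext (n+1) w)
      = Lr n (ext n (fun j : Fin n => w j.castSucc)) + (if w (Fin.last n) then uu n else 0) := by
    rw [Lr, Finset.sum_range_succ]
    congr 1
    · apply Finset.sum_congr rfl
      intro j hj
      have hj' := Finset.mem_range.mp hj
      have hj'' : j < n + 1 := by omega
      simp only [ext, dif_pos hj', dif_pos hj'']
      congr 1
    · have hn : n < n + 1 := by omega
      simp only [ext, dif_pos hn]
      rfl
  have huT : uu n + TT (n+1) = TT n := by simp [uu]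
  have hite : 0 ≤ (if w (Fin.last n) then uu n else 0) ∧ (if w (Fin.last n) then uu n else 0) ≤ uu n := by
    constructor <;> by_cases h : w (Fin.last n) <;> simp [h, (uu_pos n).le]
  obtain ⟨hx1, hx2⟩ := hw
  rw [hL] at hx1 hx2
  constructor
  · linarith [hite.1]
  · linarith [hite.2]

lemma sep (n k : ℕ) (hk : k < n) (ω τ : ℕ → Bool)
    (hpre : ∀ j < k, ω j = τ j) (hω : ω k = false) (hτ : τ k = true) :
    Lr n ω + TT n + GG k ≤ Lr n τ := by
  have hsplit : ∀ σ : ℕ → Bool, Lr n σ = Lr k σ + (if σ k then uu k else 0)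
      + ∑ j ∈ Finset.Ico (k+1) n, (if σ j then uu j else 0) := by
    intro σ
    rw [Lr, ← Finset.sum_range_add_sum_Ico _ (show k+1 ≤ n by omega), Finset.sum_range_succ]
    rfl
  have hIco_le : ∑ j ∈ Finset.Ico (k+1) n, (if ω j then uu j else 0)
      ≤ TT (k+1) - TT n := by
    have h1 : ∑ j ∈ Finset.Ico (k+1) n, (if ω j then uu j else 0) ≤ ∑ j ∈ Finset.Ico (k+1) n, uu j :=
      Finset.sum_le_sum (fun j _ => chi_le uu (fun m => (uu_pos m).le) ω j)
    have h2 : ∑ j ∈ Finset.Ico (k+1) n, uu j = TT (k+1) - TT n := by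
      rw [Finset.sum_Ico_eq_sub _ (show k+1 ≤ n by omega), sum_range_uu, sum_range_uu]
      ring
    linarith
  have hIco_nonneg : 0 ≤ ∑ j ∈ Finset.Ico (k+1) n, (if τ j then uu j else 0) :=
    Finset.sum_nonneg (fun j _ => chi_nonneg uu (fun m => (uu_pos m).le) τ j)
  have hhead : Lr k ω = Lr k τ :=
    Finset.sum_congr rfl (fun j hj => by rw [hpre j (Finset.mem_range.mp hj)])
  have hGG : GG k = uu k - TT (k+1) := by simp [GG, uu]; ring
  have h3 := hsplit ω
  have h4 := hsplit τ
  rw [hω] at h3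
  rw [hτ] at h4
  norm_num at h3 h4
  linarith

lemma ext_inj {n : ℕ} {v w : Fin n → Bool} (h : ext n v = ext n w) : v = w := by
  funext j
  have := congrFun h j.1
  simp [ext, j.2] at this
  exact this

lemma KK_interval_disjoint {n : ℕ} {v w : Fin n → Bool} (hvw : v ≠ w) :
    Disjoint (Icc (Lr n (ext n v)) (Lr n (ext n v) + TT n))
      (Icc (Lr n (ext n w)) (Lr n (ext n w) + TT n)) := by
  have hne : ext n v ≠ ext n w := fun h => hvw (ext_inj h)
  obtain ⟨m, hm, hpre⟩ := first_diff _ _ hne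
  have hmn : m < n := by
    by_contra hc
    push_neg at hc
    have h1 : ¬ (m < n) := by omega
    simp [ext, h1] at hm
  have key : ∀ (a b : ℝ), a + TT n + GG m ≤ b →
      Disjoint (Icc a (a + TT n)) (Icc b (b + TT n)) := by
    intro a b hab
    rw [Set.disjoint_left]
    rintro z ⟨_, hz2⟩ ⟨hz3, _⟩
    have := GG_pos m
    linarith
  rcases hb : ext n v m with _ | _
  · have hc : ext n w m = true := by
      rcases hc : ext n w m
      · rw [hb, hc] at hm; simp at hm
      · rfl
    exact key _ _ (sep n m hmn _ _ hpre hb hc)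
  · have hc : ext n w m = false := by
      rcases hc : ext n w m
      · rfl
      · rw [hb, hc] at hm; simp at hm
    exact (key _ _ (sep n m hmn _ _ (fun j hj => (hpre j hj).symm) hc hb)).symm

lemma prod_lower (n : ℕ) :
    (1/4 : ℝ) + (2:ℝ)⁻¹^(n+1) ≤ ∏ j ∈ Finset.range n, (1 - (2:ℝ)⁻¹ ^ (j+1)) := by
  induction n with
  | zero => norm_num
  | succ m ih =>
    rw [Finset.prod_range_succ]
    rcases Nat.eq_zero_or_pos m with rfl | hm
    · norm_num
    · obtain ⟨k, rfl⟩ := Nat.exists_eq_add_of_le hm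
      set m' := 1 + k with hm'
      have he1 := eps_pos m'
      have he2 : (2:ℝ)⁻¹ ^ (m'+1) ≤ 1/4 := by
        calc (2:ℝ)⁻¹ ^ (m'+1) ≤ (2:ℝ)⁻¹ ^ 2 := by
              apply pow_le_pow_of_le_one (by norm_num) (by norm_num) (by omega)
          _ = 1/4 := by norm_num
      have hpow : (2:ℝ)⁻¹ ^ (m'+1+1) = (2:ℝ)⁻¹ ^ (m'+1) * 2⁻¹ := pow_succ _ _
      nlinarith [mul_le_mul_of_nonneg_right ih (show (0:ℝ) ≤ 1 - (2:ℝ)⁻¹ ^ (m'+1) by linarith)]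

lemma TT_lower (n : ℕ) : (1/4 : ℝ) ≤ 2^n * TT n := by
  have h := prod_lower n
  have hpow : (2:ℝ)^n * (2:ℝ)⁻¹^n = 1 := by
    rw [← mul_pow]
    norm_num
  have he : (0:ℝ) < (2:ℝ)⁻¹^(n+1) := by positivity
  rw [TT, ← mul_assoc, hpow, one_mul]
  linarith

lemma volume_KK (n : ℕ) : ENNReal.ofReal (1/4) ≤ volume (KK n) := by
  have hmeas : ∀ w : Fin n → Bool, MeasurableSet (Icc (Lr n (ext n w)) (Lr n (ext n w) + TT n)) :=
    fun w => measurableSet_Icc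
  have hdisj : Pairwise (Function.onFun Disjoint
      (fun w : Fin n → Bool => Icc (Lr n (ext n w)) (Lr n (ext n w) + TT n))) :=
    fun v w hvw => KK_interval_disjoint hvw
  rw [KK, measure_iUnion hdisj hmeas]
  rw [tsum_fintype]
  have hvol : ∀ w : Fin n → Bool, volume (Icc (Lr n (ext n w)) (Lr n (ext n w) + TT n))
      = ENNReal.ofReal (TT n) := by
    intro w
    rw [Real.volume_Icc]
    congr 1
    ring
  rw [Finset.sum_congr rfl (fun w _ => hvol w), Finset.sum_const]
  have hcard : (Finset.univ : Finset (Fin n → Bool)).card = 2^n := by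
    simp [Fintype.card_fun]
  rw [hcard, nsmul_eq_mul]
  have hcast : ((2^n : ℕ) : ℝ≥0∞) * ENNReal.ofReal (TT n) = ENNReal.ofReal (((2^n : ℕ) : ℝ) * TT n) := by
    rw [← ENNReal.ofReal_natCast (2^n), ← ENNReal.ofReal_mul (by positivity)]
  rw [hcast]
  apply ENNReal.ofReal_le_ofReal
  have h := TT_lower n
  push_cast
  linarith

lemma exists_TT_lt {ε : ℝ} (hε : 0 < ε) : ∃ n, TT n < ε :=
  (TT_tendsto.eventually (gt_mem_nhds hε)).exists

lemma Ecan_eq_iInter : Ecan = ⋂ n, KK n := by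
  apply le_antisymm
  · exact Set.subset_iInter Ecan_subset_KK
  · intro x hx
    rw [← Ecan_closed.closure_eq, Metric.mem_closure_iff]
    intro ε hε
    obtain ⟨n, hn⟩ := exists_TT_lt hε
    have hxn : x ∈ KK n := Set.mem_iInter.mp hx n
    obtain ⟨w, hw1, hw2⟩ := Set.mem_iUnion.mp hxn
    refine ⟨Lr n (ext n w), Lr_mem_Ecan n w, ?_⟩
    rw [Real.dist_eq, abs_of_nonneg (by linarith)]
    linarith [TT_pos n]

lemma volume_Ecan : ENNReal.ofReal (1/4) ≤ volume Ecan := by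
  rw [Ecan_eq_iInter]
  have hmeas : ∀ n, NullMeasurableSet (KK n) (volume : Measure ℝ) := by
    intro n
    apply MeasurableSet.nullMeasurableSet
    exact MeasurableSet.iUnion (fun w => measurableSet_Icc)
  have hfin : ∃ n, volume (KK n) ≠ ∞ := by
    refine ⟨0, ?_⟩
    have : KK 0 ⊆ Icc (Lr 0 (ext 0 (fun j => false))) (Lr 0 (ext 0 (fun j => false)) + TT 0) := by
      intro x hx
      obtain ⟨w, hw⟩ := Set.mem_iUnion.mp hx
      have : w = (fun j => false) := by funext j; exact absurd j.2 (Nat.not_lt_zero _)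
      rwa [this] at hw
    have hle := measure_mono (μ := (volume : Measure ℝ)) this
    have : volume (Icc (Lr 0 (ext 0 (fun j => false))) (Lr 0 (ext 0 (fun j => false)) + TT 0)) < ∞ := by
      rw [Real.volume_Icc]
      exact ENNReal.ofReal_lt_top
    exact (lt_of_le_of_lt hle this).ne
  have htendsto := tendsto_measure_iInter_atTop hmeas KK_antitone hfin
  exact ge_of_tendsto htendsto (Filter.Eventually.of_forall (fun n => volume_KK n))

lemma volume_Ecan_pos : 0 < volume Ecan :=
  lt_of_lt_of_le (by norm_num) volume_Ecan

lemma interior_Ecan : interior Ecan = ∅ := by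
  by_contra hne
  obtain ⟨x, hx⟩ := Set.nonempty_iff_ne_empty.mpr hne
  obtain ⟨ε, hε, hball⟩ := Metric.isOpen_iff.mp isOpen_interior x hx
  have hballE : Metric.ball x ε ⊆ Ecan := hball.trans interior_subset
  obtain ⟨n, hn⟩ := exists_TT_lt (by linarith : (0:ℝ) < ε/2)
  have hxE : x ∈ Ecan := interior_subset hx
  obtain ⟨w, hw1, hw2⟩ := Set.mem_iUnion.mp (Ecan_subset_KK n hxE)
  have hGGle : GG n ≤ TT n := by
    rw [GG_eq]
    have h1 := eps_le n
    have h2 := eps_pos n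
    nlinarith [TT_pos n]
  have hGpos := GG_pos n
  have hyx : x < Lr n (ext n w) + TT n + GG n / 2 := by linarith
  have hymem : Lr n (ext n w) + TT n + GG n / 2 ∈ Metric.ball x ε := by
    rw [Metric.mem_ball, Real.dist_eq, abs_of_pos (by linarith)]
    linarith
  have hyE : Lr n (ext n w) + TT n + GG n / 2 ∈ Ecan := hballE hymem
  obtain ⟨w', hw1', hw2'⟩ := Set.mem_iUnion.mp (Ecan_subset_KK n hyE)
  have hvw : w ≠ w' := by
    rintro rfl
    linarith
  have hne2 : ext n w ≠ ext n w' := fun h => hvw (ext_inj h)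
  obtain ⟨m, hm, hpre⟩ := first_diff _ _ hne2
  have hmn : m < n := by
    by_contra hc
    push_neg at hc
    have h1 : ¬ (m < n) := by omega
    simp [ext, h1] at hm
  have hGGm : GG n ≤ GG m := GG_antitone (by omega)
  rcases hbm : ext n w m with _ | _
  · have hcm : ext n w' m = true := by
      rcases hcm : ext n w' m
      · rw [hbm, hcm] at hm; simp at hm
      · rfl
    have hsep := sep n m hmn _ _ hpre hbm hcm
    linarith
  · have hcm : ext n w' m = false := by
      rcases hcm : ext n w' m
      · rfl
      · rw [hbm, hcm] at hm; simp at hm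
    have hsep := sep n m hmn _ _ (fun j hj => (hpre j hj).symm) hcm hbm
    linarith

lemma Phi_abs (x y : ℝ) :
    (1/8 : ℝ) * |x - y| ≤ |Phi x - Phi y| ∧ |Phi x - Phi y| ≤ (1/2) * |x - y| := by
  rcases le_total x y with hxy | hxy
  · obtain ⟨h1, h2⟩ := Phi_main hxy
    have e1 : |x - y| = y - x := by rw [abs_sub_comm, abs_of_nonneg (by linarith)]
    have e2 : |Phi x - Phi y| = Phi y - Phi x := by
      rw [abs_sub_comm, abs_of_nonneg (by linarith)]
    rw [e1, e2]
    exact ⟨h1, h2⟩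
  · obtain ⟨h1, h2⟩ := Phi_main hxy
    have e1 : |x - y| = x - y := abs_of_nonneg (by linarith)
    have e2 : |Phi x - Phi y| = Phi x - Phi y := abs_of_nonneg (by linarith)
    rw [e1, e2]
    exact ⟨h1, h2⟩

theorem final :
    ∃ (φ₀ φ₁ : ℝ → ℝ) (A B : ℝ) (E : Set ℝ),
      0 < A ∧ A ≤ B ∧ B < 1 ∧
      (∀ x y : ℝ, A * |x - y| ≤ |φ₀ x - φ₀ y| ∧ |φ₀ x - φ₀ y| ≤ B * |x - y|) ∧
      (∀ x y : ℝ, A * |x - y| ≤ |φ₁ x - φ₁ y| ∧ |φ₁ x - φ₁ y| ≤ B * |x - y|) ∧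
      E.Nonempty ∧ IsCompact E ∧ E = φ₀ '' E ∪ φ₁ '' E ∧
      0 < MeasureTheory.volume E ∧ interior E = ∅ := by
  refine ⟨Phi, fun x => uu 0 + Phi x, 1/8, 1/2, Ecan, by norm_num, by norm_num, by norm_num,
    Phi_abs, ?_, ⟨0, zero_mem_Ecan⟩, Ecan_compact, ?_, volume_Ecan_pos, interior_Ecan⟩
  · intro x y
    have h := Phi_abs x y
    have he : uu 0 + Phi x - (uu 0 + Phi y) = Phi x - Phi y := by ring
    rw [he]
    exact h
  · have h := Ecan_eq
    have himg : (fun x => uu 0 + Phi x) '' Ecan = (fun z => uu 0 + z) '' (Phi '' Ecan) := by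
      rw [Set.image_image]
    rw [himg]
    exact h

end Stmt2


/-- There is an IFS of two bi-Lipschitz contractions on ℝ whose attractor
has positive Lebesgue measure but empty interior. -/
theorem stmt2 :
    ∃ (φ₀ φ₁ : ℝ → ℝ) (A B : ℝ) (E : Set ℝ),
      0 < A ∧ A ≤ B ∧ B < 1 ∧
      (∀ x y : ℝ, A * |x - y| ≤ |φ₀ x - φ₀ y| ∧ |φ₀ x - φ₀ y| ≤ B * |x - y|) ∧
      (∀ x y : ℝ, A * |x - y| ≤ |φ₁ x - φ₁ y| ∧ |φ₁ x - φ₁ y| ≤ B * |x - y|) ∧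
      E.Nonempty ∧ IsCompact E ∧ E = φ₀ '' E ∪ φ₁ '' E ∧
      0 < MeasureTheory.volume E ∧ interior E = ∅ :=
  Stmt2.final
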